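/- Algebraic Bethe ansatz for the six-vertex model: let M ≥ N ≥ 1, let w₁,…,w_M ∈ ℂ be nonzero, and let v₁,…,v_N ∈ ℂ be nonzero and pairwise distinct. Suppose the Bethe ansatz equations ∏_{k=1}^M (w_k/v_j − β) = (−1)^{N+1} hold for every j = 1,…,N. Then for every v ∈ ℂ with v ∉ {v₁,…,v_N}, the vector Ψ = B(v₁,{w})∘⋯∘B(v_N,{w}) |Ω⟩ satisfies (A(v,{w}) + D(v,{w})) Ψ = Λ(v) Ψ, where Λ(v) = ∏_{l=1}^M (1 − βv/w_l) · ∏_{k=1}^N (v+v_k)/(v_k−v) + ∏_{l=1}^M (v/w_l) · ∏_{k=1}^N (v+v_k)/(v−v_k). -/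

import Mathlib

noncomputable section

/-- The six-vertex L-operator, as a matrix on ℂ² ⊗ ℂ² in the ordered basis
(e₀⊗e₀, e₀⊗e₁, e₁⊗e₀, e₁⊗e₁); the first factor is the auxiliary space. -/
def L6 (β v : ℂ) : Matrix (Fin 2 × Fin 2) (Fin 2 × Fin 2) ℂ :=
  fun p q =>
    if p = ((0 : Fin 2), (0 : Fin 2)) ∧ q = (0, 0) then 1 - β * v
    else if p = (0, 1) ∧ q = (0, 1) then 1 + β * v
    else if p = (0, 1) ∧ q = (1, 0) then 2 * v
    else if p = (1, 0) ∧ q = (0, 1) then 1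
    else if p = (1, 0) ∧ q = (1, 0) then v
    else if p = (1, 1) ∧ q = (1, 1) then v
    else 0

/-- A two-site operator acting on the auxiliary space ℂ²_a and the j-th site of
(ℂ²)^{⊗M}, as a matrix on ℂ²_a ⊗ (ℂ²)^{⊗M}. -/
def siteOp (M : ℕ) (L : Matrix (Fin 2 × Fin 2) (Fin 2 × Fin 2) ℂ) (j : Fin M) :
    Matrix (Fin 2 × (Fin M → Fin 2)) (Fin 2 × (Fin M → Fin 2)) ℂ :=
  fun p q => L (p.1, p.2 j) (q.1, q.2 j) *
    (if ∀ k, k ≠ j → p.2 k = q.2 k then 1 else 0)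

/-- The inhomogeneous monodromy matrix
T_a(v,{w}) = L_{aM}(v/w₁) ∘ ⋯ ∘ L_{a1}(v/w_M) (site 1 acts first). -/
def monodromy (M : ℕ) (β v : ℂ) (w : Fin M → ℂ) :
    Matrix (Fin 2 × (Fin M → Fin 2)) (Fin 2 × (Fin M → Fin 2)) ℂ :=
  (List.ofFn fun k : Fin M => siteOp M (L6 β (v / w k)) k.rev).prod

/-- A(v,{w}) = ⟨0|_a T_a(v,{w}) |0⟩_a. -/
def Aop (M : ℕ) (β v : ℂ) (w : Fin M → ℂ) :
    Matrix (Fin M → Fin 2) (Fin M → Fin 2) ℂ :=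
  fun s s' => monodromy M β v w (0, s) (0, s')

/-- B(v,{w}) = ⟨0|_a T_a(v,{w}) |1⟩_a. -/
def Bop (M : ℕ) (β v : ℂ) (w : Fin M → ℂ) :
    Matrix (Fin M → Fin 2) (Fin M → Fin 2) ℂ :=
  fun s s' => monodromy M β v w (0, s) (1, s')

/-- C(v,{w}) = ⟨1|_a T_a(v,{w}) |0⟩_a. -/
def Cop (M : ℕ) (β v : ℂ) (w : Fin M → ℂ) :
    Matrix (Fin M → Fin 2) (Fin M → Fin 2) ℂ :=
  fun s s' => monodromy M β v w (1, s) (0, s')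

/-- D(v,{w}) = ⟨1|_a T_a(v,{w}) |1⟩_a. -/
def Dop (M : ℕ) (β v : ℂ) (w : Fin M → ℂ) :
    Matrix (Fin M → Fin 2) (Fin M → Fin 2) ℂ :=
  fun s s' => monodromy M β v w (1, s) (1, s')

/-- The vacuum vector |Ω⟩ = e₀^{⊗M}, as a coordinate vector. -/
def vac (M : ℕ) : (Fin M → Fin 2) → ℂ := fun s => if s = (fun _ => 0) then 1 else 0

namespace B6V

abbrev St (M : ℕ) := Fin M → Fin 2
abbrev I1 (M : ℕ) := Fin 2 × St M
abbrev I2 (M : ℕ) := (Fin 2 × Fin 2) × St M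

variable {M : ℕ}

def emb1 (X : Matrix (I1 M) (I1 M) ℂ) : Matrix (I2 M) (I2 M) ℂ :=
  fun p q => if p.1.2 = q.1.2 then X (p.1.1, p.2) (q.1.1, q.2) else 0

def emb2 (X : Matrix (I1 M) (I1 M) ℂ) : Matrix (I2 M) (I2 M) ℂ :=
  fun p q => if p.1.1 = q.1.1 then X (p.1.2, p.2) (q.1.2, q.2) else 0

def embR (R : Matrix (Fin 2 × Fin 2) (Fin 2 × Fin 2) ℂ) : Matrix (I2 M) (I2 M) ℂ :=
  fun p q => if p.2 = q.2 then R p.1 q.1 else 0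

theorem emb1_mul (X Y : Matrix (I1 M) (I1 M) ℂ) :
    emb1 (X * Y) = emb1 X * emb1 Y := by
  ext ⟨⟨a, b⟩, s⟩ ⟨⟨c, d⟩, t⟩
  simp only [emb1, Matrix.mul_apply, Fintype.sum_prod_type]
  rw [Finset.sum_comm]
  simp [Finset.sum_ite_eq, Finset.mul_sum, Finset.sum_comm (γ := Fin 2)]


theorem emb2_mul (X Y : Matrix (I1 M) (I1 M) ℂ) :
    emb2 (X * Y) = emb2 X * emb2 Y := by
  ext ⟨⟨a, b⟩, s⟩ ⟨⟨c, d⟩, t⟩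
  simp only [emb2, Matrix.mul_apply, Fintype.sum_prod_type]
  rw [Finset.sum_comm]
  simp [Finset.sum_ite_eq, Finset.mul_sum, Finset.sum_comm (γ := Fin 2)]

theorem emb1_one : emb1 (1 : Matrix (I1 M) (I1 M) ℂ) = 1 := by
  ext ⟨⟨a, b⟩, s⟩ ⟨⟨c, d⟩, t⟩
  simp only [emb1, Matrix.one_apply, Prod.mk.injEq, Prod.ext_iff]
  aesop

theorem emb2_one : emb2 (1 : Matrix (I1 M) (I1 M) ℂ) = 1 := by
  ext ⟨⟨a, b⟩, s⟩ ⟨⟨c, d⟩, t⟩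
  simp only [emb2, Matrix.one_apply, Prod.mk.injEq, Prod.ext_iff]
  aesop

theorem emb1_list_prod (l : List (Matrix (I1 M) (I1 M) ℂ)) :
    emb1 l.prod = (l.map emb1).prod := by
  induction l with
  | nil => simpa using emb1_one
  | cons x xs ih => simp [List.prod_cons, emb1_mul, ih]

theorem emb2_list_prod (l : List (Matrix (I1 M) (I1 M) ℂ)) :
    emb2 l.prod = (l.map emb2).prod := by
  induction l with
  | nil => simpa using emb2_one
  | cons x xs ih => simp [List.prod_cons, emb2_mul, ih]

/-- entry formula for emb1 X * emb2 Y -/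
theorem emb12_apply (X Y : Matrix (I1 M) (I1 M) ℂ) (a b c d : Fin 2) (s t : St M) :
    (emb1 X * emb2 Y) ((a, b), s) ((c, d), t)
      = ∑ r : St M, X (a, s) (c, r) * Y (b, r) (d, t) := by
  simp only [emb1, emb2, Matrix.mul_apply, Fintype.sum_prod_type]
  rw [Finset.sum_comm]
  simp [Finset.sum_ite_eq, Finset.sum_comm (γ := Fin 2)]

/-- entry formula for emb2 Y * emb1 X -/
theorem emb21_apply (X Y : Matrix (I1 M) (I1 M) ℂ) (a b c d : Fin 2) (s t : St M) :
    (emb2 Y * emb1 X) ((a, b), s) ((c, d), t)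
      = ∑ r : St M, Y (b, s) (d, r) * X (a, r) (c, t) := by
  simp only [emb1, emb2, Matrix.mul_apply, Fintype.sum_prod_type]
  rw [Finset.sum_comm]
  simp [Finset.sum_ite_eq, Finset.sum_comm (γ := Fin 2)]

theorem embR_mul_apply (R : Matrix (Fin 2 × Fin 2) (Fin 2 × Fin 2) ℂ)
    (Z : Matrix (I2 M) (I2 M) ℂ) (x : Fin 2 × Fin 2) (s : St M) (q : I2 M) :
    (embR (M := M) R * Z) (x, s) q = ∑ y : Fin 2 × Fin 2, R x y * Z (y, s) q := by
  simp only [embR, Matrix.mul_apply, Fintype.sum_prod_type]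
  rw [Finset.sum_comm]
  simp [Finset.sum_ite_eq]
  ring

theorem mul_embR_apply (R : Matrix (Fin 2 × Fin 2) (Fin 2 × Fin 2) ℂ)
    (Z : Matrix (I2 M) (I2 M) ℂ) (p : I2 M) (x : Fin 2 × Fin 2) (t : St M) :
    (Z * embR (M := M) R) p (x, t) = ∑ y : Fin 2 × Fin 2, Z p (y, t) * R y x := by
  simp only [embR, Matrix.mul_apply, Fintype.sum_prod_type]
  simp [Finset.sum_ite_eq', Finset.mul_sum]


theorem sum_local (s : St M) (j : Fin M) (F : St M → ℂ) :
    ∑ r : St M, (if ∀ k, k ≠ j → s k = r k then F r else 0)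
      = F (Function.update s j 0) + F (Function.update s j 1) := by
  have hne : Function.update s j 0 ≠ Function.update s j 1 := by
    intro h
    have := congrFun h j
    simp at this
  rw [← Finset.sum_subset
      (Finset.subset_univ {Function.update s j 0, Function.update s j 1})]
  · rw [Finset.sum_pair hne]
    have h0 : ∀ x : Fin 2, ∀ k, k ≠ j → s k = Function.update s j x k := by
      intro x k hk; simp [Function.update_of_ne hk]
    rw [if_pos (h0 0), if_pos (h0 1)]
  · intro r _ hr
    rw [if_neg]
    intro hcond
    apply hr
    have hrupd : r = Function.update s j (r j) := by
      funext k
      by_cases hk : k = j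
      · subst hk; simp
      · simp [Function.update_of_ne hk, (hcond k hk).symm]
    have h2 : r j = 0 ∨ r j = 1 := by omega
    rcases h2 with h2 | h2 <;> rw [h2] at hrupd <;> simp [hrupd]

theorem site_pair_sum (L1 L2 : Matrix (Fin 2 × Fin 2) (Fin 2 × Fin 2) ℂ)
    {j k : Fin M} (hjk : j ≠ k) (a b c d : Fin 2) (s t : St M) :
    ∑ r : St M, siteOp M L1 j (a, s) (c, r) * siteOp M L2 k (b, r) (d, t)
      = L1 (a, s j) (c, t j) * L2 (b, s k) (d, t k) *
        (if ∀ i, i ≠ j → i ≠ k → s i = t i then 1 else 0) := by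
  have hstep : ∀ r : St M,
      siteOp M L1 j (a, s) (c, r) * siteOp M L2 k (b, r) (d, t)
        = if ∀ i, i ≠ j → s i = r i then
            (L1 (a, s j) (c, r j) *
              (L2 (b, r k) (d, t k) * (if ∀ i, i ≠ k → r i = t i then 1 else 0)))
          else 0 := by
    intro r
    simp only [siteOp, mul_ite, ite_mul, mul_one, mul_zero, zero_mul, one_mul]
    split_ifs <;> ring
  rw [Finset.sum_congr rfl (fun r _ => hstep r), sum_local]
  have hiff : ∀ x : Fin 2,
      ((∀ i, i ≠ k → Function.update s j x i = t i) ↔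
        (x = t j ∧ ∀ i, i ≠ j → i ≠ k → s i = t i)) := by
    intro x
    constructor
    · intro h
      refine ⟨by simpa using h j hjk, fun i hij hik => ?_⟩
      have := h i hik
      rwa [Function.update_of_ne hij] at this
    · rintro ⟨hx, hoff⟩ i hik
      by_cases hij : i = j
      · subst hij; simpa using hx
      · rw [Function.update_of_ne hij]; exact hoff i hij hik
  have hkj : k ≠ j := fun h => hjk h.symm
  simp only [Function.update_self, Function.update_of_ne hkj, hiff]
  by_cases hoff : ∀ i, i ≠ j → i ≠ k → s i = t i
  · have h2 : t j = 0 ∨ t j = 1 := by omega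
    rcases h2 with h2 | h2 <;> rw [h2] <;> simp <;> ring
  · simp [hoff]

theorem site_comm (L1 L2 : Matrix (Fin 2 × Fin 2) (Fin 2 × Fin 2) ℂ)
    {j k : Fin M} (hjk : j ≠ k) :
    emb1 (siteOp M L1 j) * emb2 (siteOp M L2 k)
      = emb2 (siteOp M L2 k) * emb1 (siteOp M L1 j) := by
  ext ⟨⟨a, b⟩, s⟩ ⟨⟨c, d⟩, t⟩
  rw [emb12_apply, emb21_apply, site_pair_sum L1 L2 hjk,
    site_pair_sum L2 L1 (fun h => hjk h.symm)]
  have : (∀ i, i ≠ j → i ≠ k → s i = t i) ↔ (∀ i, i ≠ k → i ≠ j → s i = t i) := by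
    constructor <;> intro h i h1 h2 <;> exact h i h2 h1
  simp only [this]
  ring


def R6 (u v : ℂ) : Matrix (Fin 2 × Fin 2) (Fin 2 × Fin 2) ℂ :=
  fun p q =>
    if p = ((0 : Fin 2), (0 : Fin 2)) ∧ q = (0, 0) then u + v
    else if p = (0, 1) ∧ q = (0, 1) then v - u
    else if p = (0, 1) ∧ q = (1, 0) then 2 * u
    else if p = (1, 0) ∧ q = (0, 1) then 2 * v
    else if p = (1, 0) ∧ q = (1, 0) then u - v
    else if p = (1, 1) ∧ q = (1, 1) then u + v
    else 0

theorem site_pair_sum_same (L1 L2 : Matrix (Fin 2 × Fin 2) (Fin 2 × Fin 2) ℂ)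
    (j : Fin M) (a b c d : Fin 2) (s t : St M) :
    ∑ r : St M, siteOp M L1 j (a, s) (c, r) * siteOp M L2 j (b, r) (d, t)
      = (∑ x : Fin 2, L1 (a, s j) (c, x) * L2 (b, x) (d, t j)) *
        (if ∀ i, i ≠ j → s i = t i then 1 else 0) := by
  have hstep : ∀ r : St M,
      siteOp M L1 j (a, s) (c, r) * siteOp M L2 j (b, r) (d, t)
        = if ∀ i, i ≠ j → s i = r i then
            (L1 (a, s j) (c, r j) *
              (L2 (b, r j) (d, t j) * (if ∀ i, i ≠ j → r i = t i then 1 else 0)))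
          else 0 := by
    intro r
    simp only [siteOp, mul_ite, ite_mul, mul_one, mul_zero, zero_mul, one_mul]
    split_ifs <;> ring
  rw [Finset.sum_congr rfl (fun r _ => hstep r), sum_local]
  have hiff : ∀ x : Fin 2,
      ((∀ i, i ≠ j → Function.update s j x i = t i) ↔ (∀ i, i ≠ j → s i = t i)) := by
    intro x
    constructor <;> intro h i hij <;> have := h i hij <;>
      rwa [Function.update_of_ne hij] at *
  simp only [Function.update_self, hiff, Fin.sum_univ_two]
  split_ifs <;> ring

theorem emb12_site_apply (L1 L2 : Matrix (Fin 2 × Fin 2) (Fin 2 × Fin 2) ℂ)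
    (j : Fin M) (a b c d : Fin 2) (s t : St M) :
    (emb1 (siteOp M L1 j) * emb2 (siteOp M L2 j)) ((a, b), s) ((c, d), t)
      = (∑ x : Fin 2, L1 (a, s j) (c, x) * L2 (b, x) (d, t j)) *
        (if ∀ i, i ≠ j → s i = t i then 1 else 0) := by
  rw [emb12_apply]; exact site_pair_sum_same L1 L2 j a b c d s t

theorem emb21_site_apply (L1 L2 : Matrix (Fin 2 × Fin 2) (Fin 2 × Fin 2) ℂ)
    (j : Fin M) (a b c d : Fin 2) (s t : St M) :
    (emb2 (siteOp M L2 j) * emb1 (siteOp M L1 j)) ((a, b), s) ((c, d), t)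
      = (∑ x : Fin 2, L2 (b, s j) (d, x) * L1 (a, x) (c, t j)) *
        (if ∀ i, i ≠ j → s i = t i then 1 else 0) := by
  rw [emb21_apply]; exact site_pair_sum_same L2 L1 j b a d c s t

set_option maxHeartbeats 2000000 in
theorem local_RLL (u v cw β : ℂ) (hc : cw ≠ 0) (j : Fin M) :
    embR (R6 u v) * (emb1 (siteOp M (L6 β (u / cw)) j) * emb2 (siteOp M (L6 β (v / cw)) j))
      = (emb2 (siteOp M (L6 β (v / cw)) j) * emb1 (siteOp M (L6 β (u / cw)) j)) * embR (R6 u v) := by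
  ext ⟨⟨a, b⟩, s⟩ ⟨⟨c, d⟩, t⟩
  rw [embR_mul_apply, mul_embR_apply]
  simp only [Fintype.sum_prod_type, emb12_site_apply, emb21_site_apply]
  by_cases hoff : ∀ i, i ≠ j → s i = t i
  · simp only [if_pos hoff, mul_one]
    have hs : s j = 0 ∨ s j = 1 := by omega
    have ht : t j = 0 ∨ t j = 1 := by omega
    fin_cases a <;> fin_cases b <;> fin_cases c <;> fin_cases d <;>
      rcases hs with hs | hs <;> rcases ht with ht | ht <;>
      rw [hs, ht] <;>
      simp only [Fin.sum_univ_two, L6, R6, Prod.mk.injEq, Prod.ext_iff] <;>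
      norm_num <;> (try (field_simp; ring)) <;> (try ring) <;> tauto
  · simp [if_neg hoff]


theorem ofFn_prod_mul_prod {G : Type*} [Monoid G] :
    ∀ {n : ℕ} (f g : Fin n → G), (∀ i j, i ≠ j → Commute (f i) (g j)) →
      (List.ofFn f).prod * (List.ofFn g).prod = (List.ofFn fun i => f i * g i).prod := by
  intro n
  induction n with
  | zero => simp
  | succ n ih =>
    intro f g h
    rw [List.ofFn_succ, List.ofFn_succ, List.ofFn_succ (f := fun i => f i * g i),
      List.prod_cons, List.prod_cons, List.prod_cons]
    have hcomm : Commute (List.ofFn fun i : Fin n => f i.succ).prod (g 0) := by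
      apply Commute.list_prod_left
      intro x hx
      obtain ⟨i, rfl⟩ := List.mem_ofFn.mp hx
      exact h i.succ 0 (Fin.succ_ne_zero i)
    calc f 0 * (List.ofFn fun i : Fin n => f i.succ).prod *
          (g 0 * (List.ofFn fun i : Fin n => g i.succ).prod)
        = f 0 * (((List.ofFn fun i : Fin n => f i.succ).prod * g 0) *
            (List.ofFn fun i : Fin n => g i.succ).prod) := by
          simp [mul_assoc]
      _ = f 0 * ((g 0 * (List.ofFn fun i : Fin n => f i.succ).prod) *
            (List.ofFn fun i : Fin n => g i.succ).prod) := by rw [hcomm.eq]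
      _ = (f 0 * g 0) * ((List.ofFn fun i : Fin n => f i.succ).prod *
            (List.ofFn fun i : Fin n => g i.succ).prod) := by simp [mul_assoc]
      _ = (f 0 * g 0) * (List.ofFn fun i : Fin n => f i.succ * g i.succ).prod := by
          rw [ih _ _ fun i j hij => h i.succ j.succ (by simpa using hij)]

theorem pass_through {G : Type*} [Monoid G] :
    ∀ {n : ℕ} (Rm : G) (f g : Fin n → G), (∀ i, Rm * f i = g i * Rm) →
      Rm * (List.ofFn f).prod = (List.ofFn g).prod * Rm := by
  intro n
  induction n with
  | zero => simp
  | succ n ih =>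
    intro Rm f g h
    rw [List.ofFn_succ, List.ofFn_succ, List.prod_cons, List.prod_cons]
    rw [← mul_assoc, h 0, mul_assoc, ih Rm _ _ fun i => h i.succ, ← mul_assoc]

theorem RTT {M : ℕ} (β : ℂ) (w : Fin M → ℂ) (hw : ∀ l, w l ≠ 0) (u v : ℂ) :
    embR (R6 u v) * (emb1 (monodromy M β u w) * emb2 (monodromy M β v w))
      = (emb2 (monodromy M β v w) * emb1 (monodromy M β u w)) * embR (R6 u v) := by
  unfold monodromy
  rw [emb1_list_prod, emb2_list_prod, List.map_ofFn, List.map_ofFn]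
  have hc : ∀ i j : Fin M, i ≠ j →
      Commute ((emb1 ∘ fun k : Fin M => siteOp M (L6 β (u / w k)) k.rev) i)
        ((emb2 ∘ fun k : Fin M => siteOp M (L6 β (v / w k)) k.rev) j) := by
    intro i j hij
    exact site_comm _ _ (fun h => hij (Fin.rev_injective h))
  have hc2 : ∀ i j : Fin M, i ≠ j →
      Commute ((emb2 ∘ fun k : Fin M => siteOp M (L6 β (v / w k)) k.rev) i)
        ((emb1 ∘ fun k : Fin M => siteOp M (L6 β (u / w k)) k.rev) j) := by
    intro i j hij
    show emb2 _ * emb1 _ = emb1 _ * emb2 _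
    exact (site_comm _ _ (fun h => hij.symm (Fin.rev_injective h))).symm
  rw [ofFn_prod_mul_prod _ _ hc, ofFn_prod_mul_prod _ _ hc2]
  exact pass_through _ _ _ fun k => local_RLL u v (w k) β (hw k) k.rev


theorem E1 {M : ℕ} (β : ℂ) (w : Fin M → ℂ) (hw : ∀ l, w l ≠ 0) (u v : ℂ) :
    (u + v) • (Aop M β u w * Bop M β v w)
      = (v - u) • (Bop M β v w * Aop M β u w) + (2 * v) • (Aop M β v w * Bop M β u w) := by
  ext s t
  have h := congrFun (congrFun (RTT β w hw u v) (((0 : Fin 2), (0 : Fin 2)), s))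
    (((0 : Fin 2), (1 : Fin 2)), t)
  rw [embR_mul_apply, mul_embR_apply] at h
  simp only [Fintype.sum_prod_type, Fin.sum_univ_two, emb12_apply, emb21_apply, R6,
    Prod.mk.injEq] at h
  norm_num at h
  simp only [Matrix.smul_apply, Matrix.add_apply, Matrix.mul_apply, Aop, Bop, smul_eq_mul]
  linear_combination h

theorem E2 {M : ℕ} (β : ℂ) (w : Fin M → ℂ) (hw : ∀ l, w l ≠ 0) (u v : ℂ) :
    (2 * v) • (Bop M β u w * Dop M β v w) + (u - v) • (Dop M β u w * Bop M β v w)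
      = (u + v) • (Bop M β v w * Dop M β u w) := by
  ext s t
  have h := congrFun (congrFun (RTT β w hw u v) (((1 : Fin 2), (0 : Fin 2)), s))
    (((1 : Fin 2), (1 : Fin 2)), t)
  rw [embR_mul_apply, mul_embR_apply] at h
  simp only [Fintype.sum_prod_type, Fin.sum_univ_two, emb12_apply, emb21_apply, R6,
    Prod.mk.injEq] at h
  norm_num at h
  simp only [Matrix.smul_apply, Matrix.add_apply, Matrix.mul_apply, Bop, Dop, smul_eq_mul]
  linear_combination h

theorem E3 {M : ℕ} (β : ℂ) (w : Fin M → ℂ) (hw : ∀ l, w l ≠ 0) (u v : ℂ) :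
    (u + v) • (Bop M β u w * Bop M β v w) = (u + v) • (Bop M β v w * Bop M β u w) := by
  ext s t
  have h := congrFun (congrFun (RTT β w hw u v) (((0 : Fin 2), (0 : Fin 2)), s))
    (((1 : Fin 2), (1 : Fin 2)), t)
  rw [embR_mul_apply, mul_embR_apply] at h
  simp only [Fintype.sum_prod_type, Fin.sum_univ_two, emb12_apply, emb21_apply, R6,
    Prod.mk.injEq] at h
  norm_num at h
  simp only [Matrix.smul_apply, Matrix.mul_apply, Bop, smul_eq_mul]
  linear_combination h


theorem cont_prod {ι : Type*} [Fintype ι] [DecidableEq ι] :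
    ∀ (l : List (ℂ → Matrix ι ι ℂ)), (∀ f ∈ l, Continuous f) →
      Continuous fun u => (l.map (fun f => f u)).prod := by
  intro l
  induction l with
  | nil => intro _; simpa using continuous_const
  | cons f fs ih =>
    intro h
    simp only [List.map_cons, List.prod_cons]
    exact (h f (by simp)).matrix_mul (ih fun g hg => h g (by simp [hg]))

theorem cont_monodromy {M : ℕ} (β : ℂ) (w : Fin M → ℂ) :
    Continuous fun u => monodromy M β u w := by
  have hsite : ∀ k : Fin M, Continuous fun u => siteOp M (L6 β (u / w k)) k.rev := by
    intro k
    apply continuous_matrix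
    intro p q
    simp only [siteOp, L6]
    split_ifs <;> fun_prop
  have key := cont_prod (ι := I1 M)
    (List.ofFn fun k : Fin M => fun u => siteOp M (L6 β (u / w k)) k.rev)
    (by
      intro f hf
      obtain ⟨k, rfl⟩ := List.mem_ofFn.mp hf
      exact hsite k)
  have : (fun u => monodromy M β u w)
      = fun u => ((List.ofFn fun k : Fin M => fun u => siteOp M (L6 β (u / w k)) k.rev).map
          (fun f => f u)).prod := by
    funext u
    rw [List.map_ofFn]
    rfl
  rw [this]
  exact key

theorem cont_Bop {M : ℕ} (β : ℂ) (w : Fin M → ℂ) :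
    Continuous fun u => Bop M β u w := by
  apply continuous_matrix
  intro s t
  exact ((cont_monodromy β w).matrix_elem (0, s) (1, t))

theorem relB {M : ℕ} (β : ℂ) (w : Fin M → ℂ) (hw : ∀ l, w l ≠ 0) (u v : ℂ) :
    Bop M β u w * Bop M β v w = Bop M β v w * Bop M β u w := by
  have key : (fun u => Bop M β u w * Bop M β v w) = fun u => Bop M β v w * Bop M β u w := by
    apply Continuous.ext_on (dense_compl_singleton (-v))
    · exact (cont_Bop β w).matrix_mul continuous_const
    · exact continuous_const.matrix_mul (cont_Bop β w)
    · intro x hx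
      have hx' : x + v ≠ 0 := by
        intro h
        exact hx (by simp [Set.mem_singleton_iff]; linear_combination h)
      have := E3 β w hw x v
      exact smul_right_injective _ hx' this
  exact congrFun key u

theorem relA {M : ℕ} (β : ℂ) (w : Fin M → ℂ) (hw : ∀ l, w l ≠ 0) {u v : ℂ} (h : u ≠ v) :
    Aop M β u w * Bop M β v w
      = ((u + v) / (v - u)) • (Bop M β v w * Aop M β u w)
        + (2 * v / (u - v)) • (Bop M β u w * Aop M β v w) := by
  have hvu : v - u ≠ 0 := sub_ne_zero.mpr (Ne.symm h)
  have huv : u - v ≠ 0 := sub_ne_zero.mpr h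
  ext s t
  have e1 := congrFun (congrFun (E1 β w hw u v) s) t
  have e2 := congrFun (congrFun (E1 β w hw v u) s) t
  simp only [Matrix.smul_apply, Matrix.add_apply, smul_eq_mul] at e1 e2 ⊢
  field_simp
  linear_combination (-(u + v)) * e1 + (-2 * v) * e2

theorem relD {M : ℕ} (β : ℂ) (w : Fin M → ℂ) (hw : ∀ l, w l ≠ 0) {u v : ℂ} (h : u ≠ v) :
    Dop M β u w * Bop M β v w
      = ((u + v) / (u - v)) • (Bop M β v w * Dop M β u w)
        + (2 * v / (v - u)) • (Bop M β u w * Dop M β v w) := by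
  have hvu : v - u ≠ 0 := sub_ne_zero.mpr (Ne.symm h)
  have huv : u - v ≠ 0 := sub_ne_zero.mpr h
  ext s t
  have e2 := congrFun (congrFun (E2 β w hw u v) s) t
  simp only [Matrix.smul_apply, Matrix.add_apply, smul_eq_mul] at e2 ⊢
  field_simp
  linear_combination (v - u) * e2


def NotAt (j : Fin M) (X : Matrix (I1 M) (I1 M) ℂ) : Prop :=
  ∀ p q, X p q ≠ 0 → p.2 j = q.2 j

theorem notAt_mul {j : Fin M} {X Y : Matrix (I1 M) (I1 M) ℂ}
    (hX : NotAt j X) (hY : NotAt j Y) : NotAt j (X * Y) := by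
  intro p q hne
  by_contra hpq
  apply hne
  rw [Matrix.mul_apply]
  apply Finset.sum_eq_zero
  intro r _
  by_cases hx : X p r = 0
  · simp [hx]
  · have h1 := hX p r hx
    by_cases hy : Y r q = 0
    · simp [hy]
    · exact absurd (h1.trans (hY r q hy)) hpq

theorem notAt_site {j k : Fin M} (h : k ≠ j) (L : Matrix (Fin 2 × Fin 2) (Fin 2 × Fin 2) ℂ) :
    NotAt j (siteOp M L k) := by
  intro p q hne
  by_contra hpq
  apply hne
  simp only [siteOp]
  rw [if_neg fun hall => hpq (hall j (Ne.symm h)), mul_zero]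

def Plist (M : ℕ) (β : ℂ) (l : List (ℂ × Fin M)) : Matrix (I1 M) (I1 M) ℂ :=
  (l.map fun x => siteOp M (L6 β x.1) x.2).prod

theorem notAt_Plist {M : ℕ} (β : ℂ) (j : Fin M) :
    ∀ l : List (ℂ × Fin M), (∀ x ∈ l, x.2 ≠ j) → NotAt j (Plist M β l) := by
  intro l
  induction l with
  | nil =>
    intro _ p q hne
    have : p = q := by
      by_contra hc
      exact hne (Matrix.one_apply_ne hc)
    rw [this]
  | cons x xs ih =>
    intro h
    have : Plist M β (x :: xs) = siteOp M (L6 β x.1) x.2 * Plist M β xs := by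
      simp [Plist]
    rw [this]
    exact notAt_mul (notAt_site (h x (by simp)) _) (ih fun y hy => h y (by simp [hy]))

theorem zero_fun_iff {M : ℕ} (s : St M) (j : Fin M) :
    (s = fun _ => 0) ↔ (s j = 0 ∧ ∀ k, k ≠ j → s k = 0) := by
  constructor
  · intro h; subst h; exact ⟨rfl, fun _ _ => rfl⟩
  · rintro ⟨h1, h2⟩
    funext k
    by_cases hk : k = j
    · subst hk; exact h1
    · exact h2 k hk

-- L6 value lemmas
theorem L6v1 (β v : ℂ) : L6 β v (0, 0) (0, 0) = 1 - β * v := by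
  simp [L6]
theorem L6v2 (β v : ℂ) : L6 β v (0, 1) (0, 0) = 0 := by
  norm_num [L6, Prod.ext_iff]
theorem L6v3 (β v : ℂ) (x : Fin 2) : L6 β v (1, x) (0, 0) = 0 := by
  have h2 : x = 0 ∨ x = 1 := by omega
  rcases h2 with h | h <;> subst h <;> norm_num [L6, Prod.ext_iff]
theorem L6v4 (β v : ℂ) : L6 β v (1, 0) (1, 0) = v := by
  norm_num [L6, Prod.ext_iff]
theorem L6v5 (β v : ℂ) : L6 β v (1, 1) (1, 0) = 0 := by
  norm_num [L6, Prod.ext_iff]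
theorem L6v6 (β v : ℂ) (x : Fin 2) : L6 β v (1, x) (0, 0) = 0 := L6v3 β v x

theorem siteOp_val {M : ℕ} (L : Matrix (Fin 2 × Fin 2) (Fin 2 × Fin 2) ℂ) (j : Fin M)
    (a e : Fin 2) (s s' : St M) :
    siteOp M L j (a, s) (e, s') = L (a, s j) (e, s' j) *
      (if ∀ k, k ≠ j → s k = s' k then 1 else 0) := rfl

theorem vac_entries {M : ℕ} (β : ℂ) :
    ∀ l : List (ℂ × Fin M), l.Pairwise (fun x y => x.2 ≠ y.2) →
      (∀ s, Plist M β l (0, s) (0, fun _ => 0)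
          = if s = (fun _ => 0) then (l.map fun x => 1 - β * x.1).prod else 0)
      ∧ (∀ s, Plist M β l (1, s) (0, fun _ => 0) = 0)
      ∧ (∀ s, Plist M β l (1, s) (1, fun _ => 0)
          = if s = (fun _ => 0) then (l.map fun x => x.1).prod else 0) := by
  intro l
  induction l with
  | nil =>
    intro _
    refine ⟨fun s => ?_, fun s => ?_, fun s => ?_⟩ <;>
      simp [Plist, Matrix.one_apply, Prod.ext_iff, eq_comm]
  | cons x xs ih =>
    intro hpw
    obtain ⟨hx, hxs⟩ := List.pairwise_cons.mp hpw
    obtain ⟨ihA, ihC, ihD⟩ := ih hxs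
    obtain ⟨c, j⟩ := x
    have hmul : Plist M β ((c, j) :: xs) = siteOp M (L6 β c) j * Plist M β xs := by
      simp [Plist]
    have hNA : NotAt j (Plist M β xs) :=
      notAt_Plist β j xs fun y hy => (hx y hy).symm
    have hvj : ((fun _ => 0 : St M)) j = 0 := rfl
    refine ⟨fun s => ?_, fun s => ?_, fun s => ?_⟩
    · -- A entry
      rw [hmul, Matrix.mul_apply, Fintype.sum_prod_type, Fin.sum_univ_two]
      simp only [ihA, ihC, mul_zero, Finset.sum_const_zero, add_zero, mul_ite, mul_one]
      rw [Finset.sum_ite_eq' Finset.univ (fun _ => (0 : Fin 2)) _]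
      simp only [Finset.mem_univ, if_pos]
      rw [siteOp_val]
      by_cases hs : s = fun _ => 0
      · obtain ⟨hsj, hsoff⟩ := (zero_fun_iff s j).mp hs
        rw [if_pos hs, hsj, L6v1, if_pos fun k hk => hsoff k hk]
        simp [List.prod_cons]
        try ring
      · rw [if_neg hs]
        rcases not_and_or.mp ((zero_fun_iff s j).not.mp hs) with hsj | hsoff
        · have h1 : s j = 1 := by omega
          rw [h1, L6v2, zero_mul, zero_mul]
        · push_neg at hsoff
          obtain ⟨k, hk, hsk⟩ := hsoff
          rw [if_neg fun h => hsk (h k hk), mul_zero, zero_mul]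
    · -- C entry
      rw [hmul, Matrix.mul_apply, Fintype.sum_prod_type, Fin.sum_univ_two]
      simp only [ihA, ihC, mul_zero, Finset.sum_const_zero, add_zero, mul_ite, mul_one]
      rw [Finset.sum_ite_eq' Finset.univ (fun _ => (0 : Fin 2)) _]
      simp only [Finset.mem_univ, if_pos]
      rw [siteOp_val, L6v3, zero_mul, zero_mul]
    · -- D entry
      rw [hmul, Matrix.mul_apply, Fintype.sum_prod_type, Fin.sum_univ_two]
      have hz : ∀ s' : St M,
          siteOp M (L6 β c) j (1, s) (0, s') * Plist M β xs (0, s') (1, fun _ => 0) = 0 := by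
        intro s'
        by_cases hP : Plist M β xs (0, s') (1, fun _ => 0) = 0
        · rw [hP, mul_zero]
        · have hsj' : s' j = 0 := hNA (0, s') (1, fun _ => 0) hP
          rw [siteOp_val, hsj', L6v6, zero_mul, zero_mul]
      simp only [hz, Finset.sum_const_zero, zero_add]
      simp only [ihD, mul_ite, mul_one, mul_zero]
      rw [Finset.sum_ite_eq' Finset.univ (fun _ => (0 : Fin 2)) _]
      simp only [Finset.mem_univ, if_pos]
      rw [siteOp_val]
      by_cases hs : s = fun _ => 0
      · obtain ⟨hsj, hsoff⟩ := (zero_fun_iff s j).mp hs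
        rw [if_pos hs, hsj, L6v4, if_pos fun k hk => hsoff k hk]
        simp [List.prod_cons]
      · rw [if_neg hs]
        rcases not_and_or.mp ((zero_fun_iff s j).not.mp hs) with hsj | hsoff
        · have h1 : s j = 1 := by omega
          rw [h1, L6v5, zero_mul, zero_mul]
        · push_neg at hsoff
          obtain ⟨k, hk, hsk⟩ := hsoff
          rw [if_neg fun h => hsk (h k hk), mul_zero, zero_mul]


theorem monodromy_eq_Plist {M : ℕ} (β u : ℂ) (w : Fin M → ℂ) :
    monodromy M β u w = Plist M β (List.ofFn fun k : Fin M => (u / w k, k.rev)) := by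
  unfold monodromy Plist
  rw [List.map_ofFn]
  rfl

theorem pairwise_sites {M : ℕ} (u : ℂ) (w : Fin M → ℂ) :
    (List.ofFn fun k : Fin M => (u / w k, k.rev)).Pairwise fun x y => x.2 ≠ y.2 := by
  rw [List.pairwise_ofFn]
  intro i j hij
  exact fun h => absurd (Fin.rev_injective h) (Fin.ne_of_lt hij)

theorem monodromy_vac_A {M : ℕ} (β u : ℂ) (w : Fin M → ℂ) (s : St M) :
    monodromy M β u w (0, s) (0, fun _ => 0)
      = if s = (fun _ => 0) then ∏ l, (1 - β * u / w l) else 0 := by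
  rw [monodromy_eq_Plist]
  rw [(vac_entries β _ (pairwise_sites u w)).1 s]
  congr 1
  rw [List.map_ofFn, List.prod_ofFn]
  exact Finset.prod_congr rfl fun k _ => by rw [Function.comp_apply, mul_div_assoc]

theorem monodromy_vac_C {M : ℕ} (β u : ℂ) (w : Fin M → ℂ) (s : St M) :
    monodromy M β u w (1, s) (0, fun _ => 0) = 0 := by
  rw [monodromy_eq_Plist]
  exact (vac_entries β _ (pairwise_sites u w)).2.1 s

theorem monodromy_vac_D {M : ℕ} (β u : ℂ) (w : Fin M → ℂ) (s : St M) :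
    monodromy M β u w (1, s) (1, fun _ => 0)
      = if s = (fun _ => 0) then ∏ l, (u / w l) else 0 := by
  rw [monodromy_eq_Plist]
  rw [(vac_entries β _ (pairwise_sites u w)).2.2 s]
  congr 1
  rw [List.map_ofFn, List.prod_ofFn]
  rfl

theorem mulVec_vac {M : ℕ} (X : Matrix (St M) (St M) ℂ) :
    X.mulVec (vac M) = fun s => X s (fun _ => 0) := by
  funext s
  rw [Matrix.mulVec, dotProduct]
  simp only [vac, mul_ite, mul_one, mul_zero]
  rw [Finset.sum_ite_eq' Finset.univ (fun _ => (0 : Fin 2)) (fun t => X s t)]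
  simp

theorem Avac {M : ℕ} (β u : ℂ) (w : Fin M → ℂ) :
    (Aop M β u w).mulVec (vac M) = (∏ l, (1 - β * u / w l)) • vac M := by
  rw [mulVec_vac]
  funext s
  simp only [Aop, Pi.smul_apply, vac, smul_eq_mul, mul_ite, mul_one, mul_zero]
  exact monodromy_vac_A β u w s

theorem Dvac {M : ℕ} (β u : ℂ) (w : Fin M → ℂ) :
    (Dop M β u w).mulVec (vac M) = (∏ l, (u / w l)) • vac M := by
  rw [mulVec_vac]
  funext s
  simp only [Dop, Pi.smul_apply, vac, smul_eq_mul, mul_ite, mul_one, mul_zero]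
  exact monodromy_vac_D β u w s


def Pst {M N : ℕ} (β : ℂ) (w : Fin M → ℂ) (hw : ∀ l, w l ≠ 0) (v : Fin N → ℂ)
    (s : Finset (Fin N)) : Matrix (St M) (St M) ℂ :=
  s.noncommProd (fun j => Bop M β (v j) w)
    (fun x _ y _ _ => relB β w hw (v x) (v y))

theorem Pst_insert {M N : ℕ} (β : ℂ) (w : Fin M → ℂ) (hw : ∀ l, w l ≠ 0)
    (v : Fin N → ℂ) {a : Fin N} {s : Finset (Fin N)} (h : a ∉ s) :
    Pst β w hw v (insert a s) = Bop M β (v a) w * Pst β w hw v s :=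
  Finset.noncommProd_insert_of_notMem s a _ _ h

theorem mulVec_sum {M : ℕ} {κ : Type*} (s : Finset κ) (X : Matrix (St M) (St M) ℂ)
    (F : κ → St M → ℂ) :
    X.mulVec (∑ j ∈ s, F j) = ∑ j ∈ s, X.mulVec (F j) :=
  map_sum X.mulVecLin F s

theorem mainT {M N : ℕ} (β : ℂ) (w : Fin M → ℂ) (hw : ∀ l, w l ≠ 0)
    (v : Fin N → ℂ) (hv : Function.Injective v)
    (T : ℂ → Matrix (St M) (St M) ℂ) (αf : ℂ → ℂ) (f g : ℂ → ℂ → ℂ)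
    (hrel : ∀ u x : ℂ, u ≠ x → T u * Bop M β x w
        = f u x • (Bop M β x w * T u) + g u x • (Bop M β u w * T x))
    (hvac : ∀ u, (T u).mulVec (vac M) = αf u • vac M)
    (hscal : ∀ u a y : ℂ, u ≠ a → u ≠ y → a ≠ y →
        f u a * g u y + g u a * g a y = g u y * f y a) :
    ∀ (s : Finset (Fin N)) (u : ℂ), (∀ j ∈ s, u ≠ v j) →
      (T u).mulVec ((Pst β w hw v s).mulVec (vac M))
        = (αf u * ∏ k ∈ s, f u (v k)) • (Pst β w hw v s).mulVec (vac M)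
          + ∑ j ∈ s, (g u (v j) * αf (v j) * ∏ k ∈ s.erase j, f (v j) (v k)) •
              (Bop M β u w).mulVec ((Pst β w hw v (s.erase j)).mulVec (vac M)) := by
  intro s
  induction s using Finset.induction_on with
  | empty =>
    intro u _
    simp only [Finset.prod_empty, Finset.sum_empty, mul_one, add_zero]
    have : Pst β w hw v (∅ : Finset (Fin N)) = 1 := rfl
    rw [this, Matrix.one_mulVec, hvac]
  | @insert a t hj ih =>
    intro u hu
    have hua : u ≠ v a := hu a (Finset.mem_insert_self a t)
    have hut : ∀ j ∈ t, u ≠ v j := fun j hjt => hu j (Finset.mem_insert_of_mem hjt)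
    have hvat : ∀ j ∈ t, v a ≠ v j := fun j hjt h =>
      hj (by rw [hv h]; exact hjt)
    -- step 1: apply the exchange relation
    have h1 : (T u).mulVec ((Pst β w hw v (insert a t)).mulVec (vac M))
        = f u (v a) • (Bop M β (v a) w).mulVec ((T u).mulVec ((Pst β w hw v t).mulVec (vac M)))
          + g u (v a) • (Bop M β u w).mulVec ((T (v a)).mulVec ((Pst β w hw v t).mulVec (vac M))) := by
      rw [Pst_insert β w hw v hj, ← Matrix.mulVec_mulVec, Matrix.mulVec_mulVec (Pst β w hw v t |>.mulVec (vac M) : St M → ℂ) (T u) (Bop M β (v a) w)]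
      rw [hrel u (v a) hua, Matrix.add_mulVec, Matrix.smul_mulVec, Matrix.smul_mulVec,
        ← Matrix.mulVec_mulVec, ← Matrix.mulVec_mulVec]
    rw [h1, ih u hut, ih (v a) hvat]
    -- expand linearity
    rw [Matrix.mulVec_add, Matrix.mulVec_add, Matrix.mulVec_smul, Matrix.mulVec_smul,
      mulVec_sum, mulVec_sum]
    rw [smul_add, smul_add]
    -- identify wanted term
    rw [Finset.prod_insert hj, Finset.sum_insert hj]
    rw [Finset.erase_insert hj]
    -- B(va) B(u) commute inside sums
    have hBB : ∀ j ∈ t, (Bop M β (v a) w).mulVec ((Bop M β u w).mulVec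
          ((Pst β w hw v (t.erase j)).mulVec (vac M)))
        = (Bop M β u w).mulVec ((Pst β w hw v (insert a (t.erase j))).mulVec (vac M)) := by
      intro j hjt
      rw [Pst_insert β w hw v (fun hmem => hj (Finset.mem_of_mem_erase hmem)),
        ← Matrix.mulVec_mulVec (vac M) _ (Pst β w hw v (t.erase j)),
        Matrix.mulVec_mulVec, Matrix.mulVec_mulVec, relB β w hw (v a) u,
        ← Matrix.mulVec_mulVec, ← Matrix.mulVec_mulVec]
    -- the Ψ(insert) identification
    have hPsi : (Bop M β (v a) w).mulVec ((Pst β w hw v t).mulVec (vac M))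
        = (Pst β w hw v (insert a t)).mulVec (vac M) := by
      rw [Pst_insert β w hw v hj, ← Matrix.mulVec_mulVec]
    -- now assemble
    rw [Finset.smul_sum, Finset.smul_sum]
    have hsum1 : ∑ j ∈ t, f u (v a) • ((g u (v j) * αf (v j) * ∏ k ∈ t.erase j, f (v j) (v k)) •
          (Bop M β (v a) w).mulVec ((Bop M β u w).mulVec ((Pst β w hw v (t.erase j)).mulVec (vac M))))
        + ∑ j ∈ t, g u (v a) • ((g (v a) (v j) * αf (v j) * ∏ k ∈ t.erase j, f (v j) (v k)) •
          (Bop M β u w).mulVec ((Bop M β (v a) w).mulVec ((Pst β w hw v (t.erase j)).mulVec (vac M))))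
        = ∑ j ∈ t, (g u (v j) * αf (v j) * ∏ k ∈ (insert a t).erase j, f (v j) (v k)) •
            (Bop M β u w).mulVec ((Pst β w hw v ((insert a t).erase j)).mulVec (vac M)) := by
      rw [← Finset.sum_add_distrib]
      refine Finset.sum_congr rfl fun j hjt => ?_
      have haj : a ≠ j := fun h => hj (h ▸ hjt)
      rw [Finset.erase_insert_of_ne haj]
      have hanotin : a ∉ t.erase j := fun hmem => hj (Finset.mem_of_mem_erase hmem)
      rw [Finset.prod_insert hanotin]
      have hPsi2 : (Bop M β (v a) w).mulVec ((Pst β w hw v (t.erase j)).mulVec (vac M))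
          = (Pst β w hw v (insert a (t.erase j))).mulVec (vac M) := by
        rw [Pst_insert β w hw v hanotin, ← Matrix.mulVec_mulVec]
      rw [hBB j hjt, hPsi2, smul_smul, smul_smul, ← add_smul]
      congr 1
      have h3 : v a ≠ v j := hvat j hjt
      have h2 : u ≠ v j := hut j hjt
      have := hscal u (v a) (v j) hua h2 h3
      ring_nf
      ring_nf at this
      linear_combination (αf (v j) * ∏ k ∈ t.erase j, f (v j) (v k)) * this
    rw [hPsi]
    simp only [Matrix.mulVec_smul]
    rw [← hsum1]
    module


theorem scalarA (u a y : ℂ) (h1 : u ≠ a) (h2 : u ≠ y) (h3 : a ≠ y) :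
    (u + a) / (a - u) * (2 * y / (u - y)) + 2 * a / (u - a) * (2 * y / (a - y))
      = 2 * y / (u - y) * ((y + a) / (a - y)) := by
  have d1 : a - u ≠ 0 := sub_ne_zero.mpr h1.symm
  have d2 : u - y ≠ 0 := sub_ne_zero.mpr h2
  have d3 : u - a ≠ 0 := sub_ne_zero.mpr h1
  have d4 : a - y ≠ 0 := sub_ne_zero.mpr h3
  field_simp
  ring

theorem scalarD (u a y : ℂ) (h1 : u ≠ a) (h2 : u ≠ y) (h3 : a ≠ y) :
    (u + a) / (u - a) * (2 * y / (y - u)) + 2 * a / (a - u) * (2 * y / (y - a))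
      = 2 * y / (y - u) * ((y + a) / (y - a)) := by
  have d1 : y - u ≠ 0 := sub_ne_zero.mpr h2.symm
  have d2 : u - a ≠ 0 := sub_ne_zero.mpr h1
  have d3 : a - u ≠ 0 := sub_ne_zero.mpr h1.symm
  have d4 : y - a ≠ 0 := sub_ne_zero.mpr h3.symm
  field_simp
  ring

theorem mainA {M N : ℕ} (β : ℂ) (w : Fin M → ℂ) (hw : ∀ l, w l ≠ 0)
    (v : Fin N → ℂ) (hv : Function.Injective v)
    (s : Finset (Fin N)) (u : ℂ) (hu : ∀ j ∈ s, u ≠ v j) :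
    (Aop M β u w).mulVec ((Pst β w hw v s).mulVec (vac M))
      = ((∏ l, (1 - β * u / w l)) * ∏ k ∈ s, (u + v k) / (v k - u)) •
          (Pst β w hw v s).mulVec (vac M)
        + ∑ j ∈ s, ((2 * v j / (u - v j)) * (∏ l, (1 - β * v j / w l)) *
              ∏ k ∈ s.erase j, (v j + v k) / (v k - v j)) •
            (Bop M β u w).mulVec ((Pst β w hw v (s.erase j)).mulVec (vac M)) :=
  mainT β w hw v hv (fun u => Aop M β u w) (fun u => ∏ l, (1 - β * u / w l))
    (fun u x => (u + x) / (x - u)) (fun u x => 2 * x / (u - x))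
    (fun u x h => relA β w hw h) (fun u => Avac β u w)
    (fun u a y h1 h2 h3 => scalarA u a y h1 h2 h3) s u hu

theorem mainD {M N : ℕ} (β : ℂ) (w : Fin M → ℂ) (hw : ∀ l, w l ≠ 0)
    (v : Fin N → ℂ) (hv : Function.Injective v)
    (s : Finset (Fin N)) (u : ℂ) (hu : ∀ j ∈ s, u ≠ v j) :
    (Dop M β u w).mulVec ((Pst β w hw v s).mulVec (vac M))
      = ((∏ l, (u / w l)) * ∏ k ∈ s, (u + v k) / (u - v k)) •
          (Pst β w hw v s).mulVec (vac M)
        + ∑ j ∈ s, ((2 * v j / (v j - u)) * (∏ l, (v j / w l)) *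
              ∏ k ∈ s.erase j, (v j + v k) / (v j - v k)) •
            (Bop M β u w).mulVec ((Pst β w hw v (s.erase j)).mulVec (vac M)) :=
  mainT β w hw v hv (fun u => Dop M β u w) (fun u => ∏ l, (u / w l))
    (fun u x => (u + x) / (u - x)) (fun u x => 2 * x / (x - u))
    (fun u x h => relD β w hw h) (fun u => Dvac β u w)
    (fun u a y h1 h2 h3 => scalarD u a y h1 h2 h3) s u hu

theorem ofFn_prod_eq_Pst {M N : ℕ} (β : ℂ) (w : Fin M → ℂ) (hw : ∀ l, w l ≠ 0)
    (v : Fin N → ℂ) :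
    (List.ofFn fun j : Fin N => Bop M β (v j) w).prod = Pst β w hw v Finset.univ := by
  have h1 : Pst β w hw v Finset.univ
      = ((Finset.univ.val.map fun j : Fin N => Bop M β (v j) w)).noncommProd
          (by
            intro x hx y hy hxy
            obtain ⟨i, _, rfl⟩ := Multiset.mem_map.mp (Set.mem_setOf_eq ▸ hx)
            obtain ⟨k, _, rfl⟩ := Multiset.mem_map.mp (Set.mem_setOf_eq ▸ hy)
            exact relB β w hw (v i) (v k)) := by
    rfl
  have h2 : (Finset.univ.val.map fun j : Fin N => Bop M β (v j) w)
      = ((List.finRange N).map fun j => Bop M β (v j) w : List _) := rfl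
  rw [h1]
  rw [List.ofFn_eq_map]
  generalize_proofs hpf
  revert hpf
  rw [h2]
  intro hpf
  exact (Multiset.noncommProd_coe _ _).symm

end B6V

/-- Algebraic Bethe ansatz: if the Bethe ansatz equations hold, then the
N-particle state Ψ = B(v₁)⋯B(v_N)|Ω⟩ is an eigenvector of the transfer
matrix A(v)+D(v) with the stated eigenvalue. -/
theorem bethe_eigenstate (M N : ℕ) (hN : 1 ≤ N) (hMN : N ≤ M) (β : ℂ)
    (w : Fin M → ℂ) (hw : ∀ l, w l ≠ 0)
    (v : Fin N → ℂ) (hvne : ∀ j, v j ≠ 0) (hv : Function.Injective v)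
    (hBethe : ∀ j, ∏ k : Fin M, (w k / v j - β) = (-1 : ℂ) ^ (N + 1))
    (v0 : ℂ) (hv0 : ∀ j, v0 ≠ v j) :
    Matrix.mulVec (Aop M β v0 w + Dop M β v0 w)
        (Matrix.mulVec (List.ofFn fun j : Fin N => Bop M β (v j) w).prod (vac M)) =
      ((∏ l : Fin M, (1 - β * v0 / w l)) * ∏ k : Fin N, (v0 + v k) / (v k - v0) +
          (∏ l : Fin M, (v0 / w l)) * ∏ k : Fin N, (v0 + v k) / (v0 - v k)) •
        Matrix.mulVec (List.ofFn fun j : Fin N => Bop M β (v j) w).prod (vac M) := by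

  classical
  rw [B6V.ofFn_prod_eq_Pst β w hw v]
  rw [Matrix.add_mulVec]
  rw [B6V.mainA β w hw v hv Finset.univ v0 (fun j _ => hv0 j),
    B6V.mainD β w hw v hv Finset.univ v0 (fun j _ => hv0 j)]
  have hker : ∀ j ∈ (Finset.univ : Finset (Fin N)),
      ((2 * v j / (v0 - v j)) * (∏ l, (1 - β * v j / w l)) *
          ∏ k ∈ Finset.univ.erase j, (v j + v k) / (v k - v j))
        + ((2 * v j / (v j - v0)) * (∏ l, (v j / w l)) *
          ∏ k ∈ Finset.univ.erase j, (v j + v k) / (v j - v k)) = 0 := by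
    intro j _
    have hcard : (Finset.univ.erase j).card = N - 1 := by
      rw [Finset.card_erase_of_mem (Finset.mem_univ j), Finset.card_univ, Fintype.card_fin]
    have hprodneg : ∏ k ∈ Finset.univ.erase j, (v j + v k) / (v k - v j)
        = (-1 : ℂ) ^ (N - 1) * ∏ k ∈ Finset.univ.erase j, (v j + v k) / (v j - v k) := by
      rw [← hcard, ← Finset.prod_const (-1 : ℂ), ← Finset.prod_mul_distrib]
      refine Finset.prod_congr rfl fun k _ => ?_
      rw [show v k - v j = -(v j - v k) by ring, div_neg]
      ring
    have hαδ : (∏ l, (1 - β * v j / w l)) = (∏ l, (v j / w l)) * ((-1 : ℂ) ^ (N + 1)) := by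
      rw [← hBethe j, ← Finset.prod_mul_distrib]
      refine Finset.prod_congr rfl fun l _ => ?_
      field_simp [hw l, hvne j]
    have hppow : ((-1 : ℂ)) ^ (N + 1) * ((-1 : ℂ)) ^ (N - 1) = 1 := by
      rw [← pow_add]
      have : N + 1 + (N - 1) = 2 * N := by omega
      rw [this, pow_mul]
      norm_num
    have hx : 2 * v j / (v j - v0) = -(2 * v j / (v0 - v j)) := by
      rw [show v j - v0 = -(v0 - v j) by ring, div_neg]
    rw [hαδ, hprodneg, hx]
    linear_combination (2 * v j / (v0 - v j)) * (∏ l, (v j / w l)) *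
      (∏ k ∈ Finset.univ.erase j, (v j + v k) / (v j - v k)) * hppow
  have hsum : (∑ j ∈ (Finset.univ : Finset (Fin N)),
        ((2 * v j / (v0 - v j)) * (∏ l, (1 - β * v j / w l)) *
            ∏ k ∈ Finset.univ.erase j, (v j + v k) / (v k - v j)) •
          (Bop M β v0 w).mulVec ((B6V.Pst β w hw v (Finset.univ.erase j)).mulVec (vac M)))
      + (∑ j ∈ (Finset.univ : Finset (Fin N)),
        ((2 * v j / (v j - v0)) * (∏ l, (v j / w l)) *
            ∏ k ∈ Finset.univ.erase j, (v j + v k) / (v j - v k)) •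
          (Bop M β v0 w).mulVec ((B6V.Pst β w hw v (Finset.univ.erase j)).mulVec (vac M)))
      = 0 := by
    rw [← Finset.sum_add_distrib]
    refine Finset.sum_eq_zero fun j hj => ?_
    rw [← add_smul, hker j hj, zero_smul]
  rw [add_smul]
  calc ((∏ l, (1 - β * v0 / w l)) * ∏ k ∈ Finset.univ, (v0 + v k) / (v k - v0)) •
          (B6V.Pst β w hw v Finset.univ).mulVec (vac M)
        + (∑ j ∈ Finset.univ,
            ((2 * v j / (v0 - v j)) * (∏ l, (1 - β * v j / w l)) *
              ∏ k ∈ Finset.univ.erase j, (v j + v k) / (v k - v j)) •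
            (Bop M β v0 w).mulVec ((B6V.Pst β w hw v (Finset.univ.erase j)).mulVec (vac M)))
        + (((∏ l, (v0 / w l)) * ∏ k ∈ Finset.univ, (v0 + v k) / (v0 - v k)) •
            (B6V.Pst β w hw v Finset.univ).mulVec (vac M)
          + ∑ j ∈ Finset.univ,
            ((2 * v j / (v j - v0)) * (∏ l, (v j / w l)) *
              ∏ k ∈ Finset.univ.erase j, (v j + v k) / (v j - v k)) •
            (Bop M β v0 w).mulVec ((B6V.Pst β w hw v (Finset.univ.erase j)).mulVec (vac M)))
      = (((∏ l, (1 - β * v0 / w l)) * ∏ k ∈ Finset.univ, (v0 + v k) / (v k - v0)) •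
          (B6V.Pst β w hw v Finset.univ).mulVec (vac M)
        + ((∏ l, (v0 / w l)) * ∏ k ∈ Finset.univ, (v0 + v k) / (v0 - v k)) •
          (B6V.Pst β w hw v Finset.univ).mulVec (vac M))
        + ((∑ j ∈ Finset.univ,
            ((2 * v j / (v0 - v j)) * (∏ l, (1 - β * v j / w l)) *
              ∏ k ∈ Finset.univ.erase j, (v j + v k) / (v k - v j)) •
            (Bop M β v0 w).mulVec ((B6V.Pst β w hw v (Finset.univ.erase j)).mulVec (vac M)))
          + ∑ j ∈ Finset.univ,
            ((2 * v j / (v j - v0)) * (∏ l, (v j / w l)) *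
              ∏ k ∈ Finset.univ.erase j, (v j + v k) / (v j - v k)) •
            (Bop M β v0 w).mulVec ((B6V.Pst β w hw v (Finset.univ.erase j)).mulVec (vac M))) := by
        abel
    _ = ((∏ l, (1 - β * v0 / w l)) * ∏ k ∈ Finset.univ, (v0 + v k) / (v k - v0)) •
          (B6V.Pst β w hw v Finset.univ).mulVec (vac M)
        + ((∏ l, (v0 / w l)) * ∏ k ∈ Finset.univ, (v0 + v k) / (v0 - v k)) •
          (B6V.Pst β w hw v Finset.univ).mulVec (vac M) := by
        rw [hsum, add_zero]
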